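/- Suppose A_1, ..., A_m are events in a probability space with P(A_i) ≤ p for all i, and Γ is a graph on [m] such that each A_i is mutually independent of the collection {A_j : j not adjacent to i in Γ, j ≠ i}. If e·p·(Δ(Γ) + 1) < 1, then P(⋂ Ā_i) > 0. -/

import Mathlib

open MeasureTheory


/-- Symmetric Lovász Local Lemma: if events `A₁, …, A_m` satisfy `P(A_i) ≤ p`, each `A_i`
is mutually independent of the collection of `A_j` with `j` not adjacent to `i` in a
dependency graph `Γ`, and `e·p·(Δ(Γ) + 1) < 1`, then with positive probability none of
the `A_i` occur. -/
theorem stmt19 {Ω : Type*} [MeasurableSpace Ω] (μ : MeasureTheory.Measure Ω)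
    [MeasureTheory.IsProbabilityMeasure μ]
    (m : ℕ) (A : Fin m → Set Ω) (hmeas : ∀ i, MeasurableSet (A i))
    (p : ℝ) (hp : ∀ i, μ (A i) ≤ ENNReal.ofReal p)
    (Γ : SimpleGraph (Fin m)) (_ : DecidableRel Γ.Adj)
    -- each `A i` is mutually independent of `{A j : j ≁ i, j ≠ i}`
    (hind : ∀ i : Fin m, ∀ S T : Finset (Fin m),
      (∀ j ∈ S, ¬ Γ.Adj i j ∧ j ≠ i) → (∀ j ∈ T, ¬ Γ.Adj i j ∧ j ≠ i) →
      μ (A i ∩ ((⋂ j ∈ S, A j) ∩ ⋂ j ∈ T, (A j)ᶜ)) =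
        μ (A i) * μ ((⋂ j ∈ S, A j) ∩ ⋂ j ∈ T, (A j)ᶜ))
    (hLLL : Real.exp 1 * p * ((Γ.maxDegree : ℝ) + 1) < 1) :
    0 < μ (⋂ i : Fin m, (A i)ᶜ) := by
  classical
  set Δ : ℕ := Γ.maxDegree with hΔdef
  set d : ℝ := (Δ : ℝ) with hddef
  have hd0 : 0 ≤ d := Nat.cast_nonneg _
  set q : ℝ := max p 0 with hqdef
  have hq0 : 0 ≤ q := le_max_right _ _
  set x : ℝ := 1 / (d + 2) with hxdef
  have hx0 : 0 < x := by positivity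
  have hx1 : x < 1 := by
    rw [hxdef, div_lt_one (by linarith)]; linarith
  have hqp : ∀ i, (μ (A i)).toReal ≤ q := by
    intro i
    have h1 : μ (A i) ≤ ENNReal.ofReal q := by
      refine le_trans (hp i) (ENNReal.ofReal_le_ofReal (le_max_left _ _))
    calc (μ (A i)).toReal ≤ (ENNReal.ofReal q).toReal :=
          ENNReal.toReal_mono ENNReal.ofReal_ne_top h1
      _ = q := ENNReal.toReal_ofReal hq0
  -- the exponential bound
  have hqe : Real.exp 1 * q * (d + 1) < 1 := by
    rcases max_cases p 0 with ⟨h1, h2⟩ | ⟨h1, h2⟩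
    · rw [hqdef, h1]; exact hLLL
    · rw [hqdef, h1]; simp [Real.exp_pos]
  have hexp_pos : (0:ℝ) < Real.exp 1 := Real.exp_pos 1
  have hkey_exp : ((d + 2) / (d + 1)) ^ (Δ + 1) ≤ Real.exp 1 := by
    have h1 : (d + 2) / (d + 1) = 1 + 1 / (d + 1) := by
      field_simp
      ring
    have h2 : 1 + 1 / (d + 1) ≤ Real.exp (1 / (d + 1)) := by
      have := Real.add_one_le_exp (1 / (d + 1)); linarith
    have h3 : ((d + 2) / (d + 1)) ^ (Δ + 1) ≤ (Real.exp (1 / (d + 1))) ^ (Δ + 1) := by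
      apply pow_le_pow_left₀ (by positivity) (by rw [h1]; exact h2)
    refine le_trans h3 ?_
    rw [← Real.exp_nat_mul]
    have : ((Δ + 1 : ℕ) : ℝ) * (1 / (d + 1)) = 1 := by
      push_cast [hddef]
      field_simp
    rw [this]
  have hq_bound : q ≤ x * (1 - x) ^ Δ := by
    have h1x : (1 : ℝ) - x = (d + 1) / (d + 2) := by
      rw [hxdef]; field_simp
      ring
    have hxval : x * (1 - x) ^ Δ = (d + 1) ^ Δ / (d + 2) ^ (Δ + 1) := by
      rw [h1x, hxdef, div_pow, pow_succ]
      field_simp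
    -- from hkey_exp : (d+2)^(Δ+1) ≤ e * (d+1)^(Δ+1)
    have hP : (d + 2) ^ (Δ + 1) ≤ Real.exp 1 * (d + 1) ^ (Δ + 1) := by
      have h := hkey_exp
      rw [div_pow] at h
      have hb : (0:ℝ) < (d + 1) ^ (Δ + 1) := by positivity
      rw [div_le_iff₀ hb] at h
      linarith [h]
    have h1 : 1 ≤ Real.exp 1 * (d + 1) * (x * (1 - x) ^ Δ) := by
      rw [hxval]
      have hb : (0:ℝ) < (d + 2) ^ (Δ + 1) := by positivity
      rw [← mul_div_assoc, le_div_iff₀ hb, one_mul]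
      calc (d + 2) ^ (Δ + 1) ≤ Real.exp 1 * (d + 1) ^ (Δ + 1) := hP
        _ = Real.exp 1 * (d + 1) * (d + 1) ^ Δ := by rw [pow_succ]; ring
    -- q * (e*(d+1)) < 1 ≤ (e*(d+1)) * (x*(1-x)^Δ)  ⇒ q ≤ x*(1-x)^Δ
    have hpos : (0:ℝ) < Real.exp 1 * (d + 1) := by positivity
    nlinarith [hqe, h1]
  have hx_small : q ≤ x := by
    refine le_trans hq_bound ?_
    have : (1 - x) ^ Δ ≤ 1 := pow_le_one₀ (by linarith) (by linarith)
    nlinarith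
  -- measurability of the intersections
  have hmeasC : ∀ S : Finset (Fin m), MeasurableSet (⋂ j ∈ S, (A j)ᶜ) := fun S =>
    MeasurableSet.biInter S.countable_toSet (fun j _ => (hmeas j).compl)
  set F : Finset (Fin m) → ℝ := fun S => (μ (⋂ j ∈ S, (A j)ᶜ)).toReal with hFdef
  have hF_nonneg : ∀ S, 0 ≤ F S := fun S => ENNReal.toReal_nonneg
  have hFempty : F ∅ = 1 := by
    simp [hFdef]
  have hsplit : ∀ (j : Fin m) (S : Finset (Fin m)), j ∉ S →
      F (insert j S) = F S - (μ (A j ∩ ⋂ k ∈ S, (A k)ᶜ)).toReal := by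
    intro j S hj
    have h1 : (⋂ k ∈ insert j S, (A k)ᶜ) = (⋂ k ∈ S, (A k)ᶜ) \ A j := by
      rw [Finset.set_biInter_insert]
      ext ω
      simp only [Set.mem_inter_iff, Set.mem_compl_iff, Set.mem_diff]
      tauto
    have h2 : μ ((⋂ k ∈ S, (A k)ᶜ) ∩ A j) + μ ((⋂ k ∈ S, (A k)ᶜ) \ A j)
        = μ (⋂ k ∈ S, (A k)ᶜ) := measure_inter_add_diff _ (hmeas j)
    have h3 : ((μ ((⋂ k ∈ S, (A k)ᶜ) ∩ A j)) + (μ ((⋂ k ∈ S, (A k)ᶜ) \ A j))).toReal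
        = (μ ((⋂ k ∈ S, (A k)ᶜ) ∩ A j)).toReal + (μ ((⋂ k ∈ S, (A k)ᶜ) \ A j)).toReal :=
      ENNReal.toReal_add (measure_ne_top μ _) (measure_ne_top μ _)
    have h4 : A j ∩ (⋂ k ∈ S, (A k)ᶜ) = (⋂ k ∈ S, (A k)ᶜ) ∩ A j := Set.inter_comm _ _
    rw [hFdef]
    simp only
    rw [h1, h4]
    have h5 := congrArg ENNReal.toReal h2
    rw [h3] at h5
    linarith
  -- the key induction
  have key : ∀ n : ℕ, ∀ S : Finset (Fin m), S.card ≤ n → ∀ i, i ∉ S →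
      (μ (A i ∩ ⋂ j ∈ S, (A j)ᶜ)).toReal ≤ x * F S := by
    intro n
    induction n with
    | zero =>
      intro S hS i hi
      have hS0 : S = ∅ := Finset.card_eq_zero.mp (le_antisymm hS (Nat.zero_le _))
      subst hS0
      rw [hFempty]
      simp only [Finset.notMem_empty, Set.iInter_of_empty, Set.iInter_univ, Set.inter_univ]
      calc (μ (A i)).toReal ≤ q := hqp i
        _ ≤ x := hx_small
        _ = x * 1 := (mul_one x).symm
    | succ n IH =>
      intro S hS i hi
      set N : Finset (Fin m) := S.filter (fun j => Γ.Adj i j) with hNdef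
      set S₂ : Finset (Fin m) := S.filter (fun j => ¬ Γ.Adj i j) with hS2def
      have hNS : N ∪ S₂ = S := Finset.filter_union_filter_not_eq _ S
      have hcardNS : N.card + S₂.card = S.card :=
        Finset.card_filter_add_card_filter_not _
      have hmemS2 : ∀ j ∈ S₂, ¬ Γ.Adj i j ∧ j ≠ i := by
        intro j hj
        obtain ⟨hjS, hja⟩ := Finset.mem_filter.mp hj
        exact ⟨hja, fun h => hi (h ▸ hjS)⟩
      -- independence step
      have hind2 : μ (A i ∩ ⋂ j ∈ S₂, (A j)ᶜ) = μ (A i) * μ (⋂ j ∈ S₂, (A j)ᶜ) := by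
        have h := hind i ∅ S₂ (by simp) hmemS2
        simpa using h
      -- degree bound
      have hNcard : N.card ≤ Δ := by
        have hsub : N ⊆ Γ.neighborFinset i := by
          intro j hj
          rw [SimpleGraph.mem_neighborFinset]
          exact (Finset.mem_filter.mp hj).2
        calc N.card ≤ (Γ.neighborFinset i).card := Finset.card_le_card hsub
          _ = Γ.degree i := rfl
          _ ≤ Δ := Γ.degree_le_maxDegree i
      -- peeling the neighbors
      have peel : ∀ T : Finset (Fin m), T ⊆ N → (1 - x) ^ T.card * F S₂ ≤ F (S₂ ∪ T) := by
        intro T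
        induction T using Finset.induction_on with
        | empty => intro _; simp
        | @insert j T hj IHT =>
          intro hTN
          have hjN : j ∈ N := hTN (Finset.mem_insert_self _ _)
          have hTN' : T ⊆ N := fun a ha => hTN (Finset.mem_insert_of_mem ha)
          have hjS2T : j ∉ S₂ ∪ T := by
            intro hmem
            rcases Finset.mem_union.mp hmem with h | h
            · exact (Finset.mem_filter.mp h).2 ((Finset.mem_filter.mp hjN).2)
            · exact hj h
          have hcard' : (S₂ ∪ T).card ≤ n := by
            have h1 : (insert j T).card ≤ N.card :=
              Finset.card_le_card hTN
            have h2 : (insert j T).card = T.card + 1 := Finset.card_insert_of_notMem hj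
            have h3 : (S₂ ∪ T).card ≤ S₂.card + T.card := Finset.card_union_le _ _
            omega
          have hkey := IH (S₂ ∪ T) hcard' j hjS2T
          have hins := hsplit j (S₂ ∪ T) hjS2T
          have hEq : S₂ ∪ insert j T = insert j (S₂ ∪ T) := Finset.union_insert _ _ _
          rw [hEq, hins, Finset.card_insert_of_notMem hj, pow_succ]
          have hIHT := IHT hTN'
          nlinarith [hF_nonneg (S₂ ∪ T), hF_nonneg S₂,
            mul_le_mul_of_nonneg_left hIHT (by linarith : (0:ℝ) ≤ 1 - x)]
      have hpeelN : (1 - x) ^ N.card * F S₂ ≤ F S := by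
        have := peel N (le_refl N)
        rwa [Finset.union_comm, hNS] at this
      -- monotonicity
      have hmono : μ (A i ∩ ⋂ j ∈ S, (A j)ᶜ) ≤ μ (A i ∩ ⋂ j ∈ S₂, (A j)ᶜ) := by
        apply measure_mono
        apply Set.inter_subset_inter_right
        intro ω hω
        simp only [Set.mem_iInter] at hω ⊢
        exact fun j hj => hω j (Finset.filter_subset _ _ hj)
      have hchain1 : (μ (A i ∩ ⋂ j ∈ S, (A j)ᶜ)).toReal
          ≤ (μ (A i)).toReal * F S₂ := by
        calc (μ (A i ∩ ⋂ j ∈ S, (A j)ᶜ)).toReal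
            ≤ (μ (A i ∩ ⋂ j ∈ S₂, (A j)ᶜ)).toReal :=
              ENNReal.toReal_mono (measure_ne_top μ _) hmono
          _ = (μ (A i)).toReal * F S₂ := by rw [hind2, ENNReal.toReal_mul]
      have hpow_mono : (1 - x) ^ Δ ≤ (1 - x) ^ N.card :=
        pow_le_pow_of_le_one (by linarith) (by linarith) hNcard
      calc (μ (A i ∩ ⋂ j ∈ S, (A j)ᶜ)).toReal
          ≤ (μ (A i)).toReal * F S₂ := hchain1
        _ ≤ q * F S₂ := mul_le_mul_of_nonneg_right (hqp i) (hF_nonneg _)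
        _ ≤ (x * (1 - x) ^ Δ) * F S₂ := mul_le_mul_of_nonneg_right hq_bound (hF_nonneg _)
        _ ≤ (x * (1 - x) ^ N.card) * F S₂ := by
            have := mul_le_mul_of_nonneg_left hpow_mono (le_of_lt hx0)
            exact mul_le_mul_of_nonneg_right this (hF_nonneg _)
        _ = x * ((1 - x) ^ N.card * F S₂) := by ring
        _ ≤ x * F S := mul_le_mul_of_nonneg_left hpeelN (le_of_lt hx0)
  -- final induction: F S ≥ (1-x)^|S|
  have final : ∀ S : Finset (Fin m), (1 - x) ^ S.card ≤ F S := by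
    intro S
    induction S using Finset.induction_on with
    | empty => simp [hFempty]
    | @insert j S hj IH =>
      have hkey := key S.card S (le_refl _) j hj
      have hins := hsplit j S hj
      rw [hins, Finset.card_insert_of_notMem hj, pow_succ]
      nlinarith [hF_nonneg S, pow_nonneg (by linarith : (0:ℝ) ≤ 1 - x) S.card]
  have hFuniv : 0 < F (Finset.univ : Finset (Fin m)) := by
    have h1 := final (Finset.univ : Finset (Fin m))
    have h2 : (0:ℝ) < (1 - x) ^ (Finset.univ : Finset (Fin m)).card :=
      pow_pos (by linarith) _
    linarith
  have hEq : (⋂ i : Fin m, (A i)ᶜ) = ⋂ j ∈ (Finset.univ : Finset (Fin m)), (A j)ᶜ := by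
    simp
  rw [hEq]
  have := ENNReal.toReal_pos_iff.mp hFuniv
  exact this.1
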